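/- The streamlining procedure does not change the language of a structured deterministic parity automaton: for every infinite word, the parity of the least color occurring infinitely often along its run is the same in the original and the streamlined automaton. -/

import Mathlib

open Classical

universe u v

/-- A deterministic parity automaton with transition-based acceptance. -/
structure DPA (Q : Type u) (A : Type v) where
  init : Q
  trans : Q → A → Q
  color : Q → A → ℕ

/-- A word (or a color sequence) hits value `c` infinitely often. -/
def InfOften (f : ℕ → ℕ) (c : ℕ) : Prop := ∀ N, ∃ n, N ≤ n ∧ f n = c

namespace DPA

variable {Q : Type u} {A : Type v}

/-- The unique run of a DPA from state `q` on infinite word `w`. -/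
def runFrom (M : DPA Q A) (q : Q) (w : ℕ → A) : ℕ → Q
  | 0 => q
  | n + 1 => M.trans (M.runFrom q w n) (w n)

/-- The color sequence of the run from `q` on `w`. -/
def colorsFrom (M : DPA Q A) (q : Q) (w : ℕ → A) (n : ℕ) : ℕ :=
  M.color (M.runFrom q w n) (w n)

/-- The dominating (least infinitely often occurring) color of the run from `q` on `w`. -/
noncomputable def domColorFrom (M : DPA Q A) (q : Q) (w : ℕ → A) : ℕ :=
  sInf {c | InfOften (M.colorsFrom q w) c}

/-- Parity acceptance from a state. -/
def acceptsFrom (M : DPA Q A) (q : Q) (w : ℕ → A) : Prop :=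
  Even (M.domColorFrom q w)

def langFrom (M : DPA Q A) (q : Q) : Set (ℕ → A) := {w | M.acceptsFrom q w}

def lang (M : DPA Q A) : Set (ℕ → A) := M.langFrom M.init

/-- Language equivalence of states. -/
def LangEquiv (M : DPA Q A) (q q' : Q) : Prop := M.langFrom q = M.langFrom q'

/-- Reachability in the transition structure. -/
def Reach (M : DPA Q A) : Q → Q → Prop :=
  Relation.ReflTransGen (fun a b => ∃ x, M.trans a x = b)

/-- A DPA is structured: all states reachable, and language-equivalent states are
mutually reachable (same maximal SCC). -/
def Structured (M : DPA Q A) : Prop :=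
  (∀ q, M.Reach M.init q) ∧
  ∀ q q', M.LangEquiv q q' → M.Reach q q' ∧ M.Reach q' q

noncomputable def maxColor (M : DPA Q A) [Fintype Q] [Fintype A] : ℕ :=
  Finset.univ.sup fun t : Q × A => M.color t.1 t.2

/-- Same transition structure, new coloring. -/
def recolor (M : DPA Q A) (c : Q × A → ℕ) : DPA Q A :=
  ⟨M.init, M.trans, fun q x => c (q, x)⟩

/-- Extension of the transition function to finite words. -/
def runList (M : DPA Q A) (q : Q) (u : List A) : Q := u.foldl M.trans q

end DPA

/-- A (nondeterministic) automaton with colored transitions; used as co-Büchi automaton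
(colors 1 = rejecting, 2 = accepting). -/
structure NCA (Q : Type u) (A : Type v) where
  inits : Set Q
  trans : Set (Q × A × Q × ℕ)

namespace NCA

variable {Q : Type u} {A : Type v}

def IsRun (N : NCA Q A) (w : ℕ → A) (ρ : ℕ → Q) (γ : ℕ → ℕ) : Prop :=
  ρ 0 ∈ N.inits ∧ ∀ n, (ρ n, w n, ρ (n + 1), γ n) ∈ N.trans

/-- Co-Büchi acceptance: some run takes rejecting transitions only finitely often,
i.e. from some point on only accepting (color 2) transitions. -/
def accepts (N : NCA Q A) (w : ℕ → A) : Prop :=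
  ∃ ρ γ, N.IsRun w ρ γ ∧ ∃ p, ∀ n, p ≤ n → γ n = 2

/-- A finite run prefix on a finite word. -/
def FinRunOn (N : NCA Q A) (xs : List A) (ρ : ℕ → Q) (γ : ℕ → ℕ) : Prop :=
  ρ 0 ∈ N.inits ∧ ∀ k (hk : k < xs.length), (ρ k, xs[k], ρ (k + 1), γ k) ∈ N.trans

end NCA

namespace DPA

variable {Q : Type u} {A : Type v}

/-- The co-Büchi automaton `A_i` derived from a DPA: transitions of color ≥ i become
accepting (2), those of color < i rejecting (1), plus rejecting transitions to every
state language-equivalent to the deterministic successor that is not already a target. -/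
def derived (M : DPA Q A) (i : ℕ) : NCA Q A where
  inits := {M.init}
  trans :=
    {t | ∃ q x, t = (q, x, M.trans q x, if i ≤ M.color q x then 2 else 1)} ∪
    {t | ∃ q x q'', q'' ≠ M.trans q x ∧ M.LangEquiv q'' (M.trans q x) ∧ t = (q, x, q'', 1)}

end DPA

/-- State of the streamlining procedure: remaining coloring graph (as set of transitions,
identified by source state and letter), current color assignment, and counter. -/
structure SState (Q : Type u) (A : Type v) where
  graph : Set (Q × A)
  col : Q × A → ℕ
  counter : ℕ

namespace DPA

variable {Q : Type u} {A : Type v}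

/-- Edge relation of the coloring graph `G`. -/
def edgeIn (M : DPA Q A) (G : Set (Q × A)) (a b : Q) : Prop :=
  ∃ x, (a, x) ∈ G ∧ M.trans a x = b

def reachIn (M : DPA Q A) (G : Set (Q × A)) : Q → Q → Prop :=
  Relation.ReflTransGen (M.edgeIn G)

def SameSCC (M : DPA Q A) (G : Set (Q × A)) (a b : Q) : Prop :=
  M.reachIn G a b ∧ M.reachIn G b a

/-- A transition is transient in `G` if it lies on no cycle of `G`. -/
def Transient (M : DPA Q A) (G : Set (Q × A)) (t : Q × A) : Prop :=
  ¬ M.reachIn G (M.trans t.1 t.2) t.1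

/-- The least color (under `col`) of transitions lying within the SCC of `q` in `G`. -/
noncomputable def sccMinCol (M : DPA Q A) (G : Set (Q × A)) (col : Q × A → ℕ) (q : Q) : ℕ :=
  sInf {c | ∃ p x, (p, x) ∈ G ∧ M.SameSCC G p q ∧ M.SameSCC G (M.trans p x) q ∧
    col (p, x) = c}

/-- One step of the streamlining procedure (Carton–Maceiras style):
recolor/remove transient transitions if any; otherwise recolor/remove minimal-color
transitions of SCCs whose minimal color has the counter's parity if any;
otherwise increment the counter. -/
noncomputable def streamStep (M : DPA Q A) (s : SState Q A) : SState Q A :=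
  if s.graph = ∅ then s
  else
    let T := {t ∈ s.graph | M.Transient s.graph t}
    if T ≠ ∅ then
      ⟨s.graph \ T, fun t => if t ∈ T then s.counter else s.col t, s.counter⟩
    else
      let R := {t ∈ s.graph | M.SameSCC s.graph t.1 (M.trans t.1 t.2) ∧
        s.col t = M.sccMinCol s.graph s.col t.1 ∧ s.col t % 2 = s.counter % 2}
      if R ≠ ∅ then
        ⟨s.graph \ R, fun t => if t ∈ R then s.counter else s.col t, s.counter⟩
      else ⟨s.graph, s.col, s.counter + 1⟩

/-- The streamlining procedure after `n` steps, starting from the full transition graph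
with the original colors and counter 0. -/
noncomputable def streamRun (M : DPA Q A) (n : ℕ) : SState Q A :=
  (M.streamStep)^[n] ⟨Set.univ, fun t => M.color t.1 t.2, 0⟩

/-- A co-run: follow the run for a finite prefix, then once jump to a language-equivalent
state and follow the deterministic transitions from there. -/
def IsCoRun (M : DPA Q A) (w : ℕ → A) (σ : ℕ → Q) : Prop :=
  ∃ p, 0 < p ∧ (∀ n, n < p → σ n = M.runFrom M.init w n) ∧
    M.LangEquiv (σ p) (M.runFrom M.init w p) ∧
    ∀ n, p ≤ n → σ (n + 1) = M.trans (σ n) (w n)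

/-- The dominating (least infinitely often occurring) color along a co-run. -/
noncomputable def coRunDom (M : DPA Q A) (w : ℕ → A) (σ : ℕ → Q) : ℕ :=
  sInf {c | InfOften (fun n => M.color (σ n) (w n)) c}

/-- An accepting SCC (for threshold color `i`): a nonempty state set with a nonempty set of
transitions of color ≥ i among them that is strongly connected. -/
def AccSCC (M : DPA Q A) (i : ℕ) (S : Set Q) (T : Set (Q × A)) : Prop :=
  S.Nonempty ∧ T.Nonempty ∧
  (∀ t ∈ T, t.1 ∈ S ∧ M.trans t.1 t.2 ∈ S ∧ i ≤ M.color t.1 t.2) ∧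
  ∀ q ∈ S, ∀ q' ∈ S,
    Relation.ReflTransGen (fun a b => ∃ x, (a, x) ∈ T ∧ M.trans a x = b) q q'

/-- Redirect the transition `(s, x)` to target `q'` instead. -/
noncomputable def redirect (M : DPA Q A) (s : Q) (x : A) (q' : Q) : DPA Q A :=
  ⟨M.init, fun a y => if a = s ∧ y = x then q' else M.trans a y, M.color⟩

end DPA

section Words

variable {A : Type v} [Inhabited A]

/-- Prepend a finite word to an infinite word. -/
def listApp (u : List A) (w : ℕ → A) : ℕ → A :=
  fun n => if n < u.length then u.getD n default else w (n - u.length)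

/-- The suffix language of `L` after the finite word `u`. -/
def suffixLang (L : Set (ℕ → A)) (u : List A) : Set (ℕ → A) :=
  {w | listApp u w ∈ L}

/-- `u` is suffix-language-invariant for `L` after `w`. -/
def SuffixInv (L : Set (ℕ → A)) (u w : List A) : Prop :=
  suffixLang L w = suffixLang L (w ++ u)

/-- The first `n` letters of an infinite word. -/
def prefixList (w : ℕ → A) (n : ℕ) : List A := (List.range n).map w

/-- The finite segment `w a, w (a+1), ..., w (b-1)` of an infinite word. -/
def seg (w : ℕ → A) (a b : ℕ) : List A := (List.range (b - a)).map fun k => w (a + k)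

/-- `w'` results from a suffix-language-invariant injection of finite words into `w`
at the positions in `J`: there is a monotone reindexing `f` of the letters of `w`, the
gaps occur only after positions in `J`, and each inserted segment is
suffix-language-invariant for `L` after the corresponding prefix of `w`. -/
def IsInj (L : Set (ℕ → A)) (w : ℕ → A) (J : Set ℕ) (w' : ℕ → A) : Prop :=
  ∃ f : ℕ → ℕ, f 0 = 0 ∧ (∀ n, w' (f n) = w n) ∧
    (∀ n, n ∉ J → f (n + 1) = f n + 1) ∧
    (∀ n, n ∈ J → f n < f (n + 1) ∧
      SuffixInv L (seg w' (f n + 1) (f (n + 1))) (prefixList w (n + 1)))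

/-- `w` is at home in color `i` for the language `L`. -/
def AtHome (L : Set (ℕ → A)) (i : ℕ) (w : ℕ → A) : Prop :=
  ∃ J : Set ℕ, J.Infinite ∧ ∀ w', IsInj L w J w' →
    (∃ i', ∃ _ : i' < i, AtHome L i' w') ∨
    ((w ∈ L ∧ w' ∈ L ∧ Even i) ∨ (w ∉ L ∧ w' ∉ L ∧ Odd i))
  termination_by i

/-- The natural color of `w` for `L`: the least color `w` is at home in. -/
noncomputable def naturalColor (L : Set (ℕ → A)) (w : ℕ → A) : ℕ :=
  sInf {i | AtHome L i w}

/-- The ultimately periodic word `u v^ω`. -/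
def upw (u v : List A) : ℕ → A :=
  fun n => if n < u.length then u.getD n default
           else v.getD ((n - u.length) % v.length) default

/-- Insert the finite word `u` immediately after position `j` of `w`. -/
def insertWord (w : ℕ → A) (j : ℕ) (u : List A) : ℕ → A :=
  fun n => if n ≤ j then w n
           else if n - (j + 1) < u.length then u.getD (n - (j + 1)) default
           else w (n - u.length)

end Words

section Aux

namespace DPA

variable {Q : Type u} {A : Type v}

/-- The transient set used in `streamStep`. -/
def Tset (M : DPA Q A) (s : SState Q A) : Set (Q × A) :=
  {t ∈ s.graph | M.Transient s.graph t}

/-- The minimal-color set used in `streamStep`. -/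
def Rset (M : DPA Q A) (s : SState Q A) : Set (Q × A) :=
  {t ∈ s.graph | M.SameSCC s.graph t.1 (M.trans t.1 t.2) ∧
    s.col t = M.sccMinCol s.graph s.col t.1 ∧ s.col t % 2 = s.counter % 2}

lemma streamStep_def (M : DPA Q A) (s : SState Q A) : M.streamStep s =
    if s.graph = ∅ then s
    else if {t ∈ s.graph | M.Transient s.graph t} ≠ ∅ then
      ⟨s.graph \ {t ∈ s.graph | M.Transient s.graph t},
       fun t => if t ∈ {t ∈ s.graph | M.Transient s.graph t} then s.counter else s.col t,
       s.counter⟩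
    else if {t ∈ s.graph | M.SameSCC s.graph t.1 (M.trans t.1 t.2) ∧
        s.col t = M.sccMinCol s.graph s.col t.1 ∧ s.col t % 2 = s.counter % 2} ≠ ∅ then
      ⟨s.graph \ {t ∈ s.graph | M.SameSCC s.graph t.1 (M.trans t.1 t.2) ∧
        s.col t = M.sccMinCol s.graph s.col t.1 ∧ s.col t % 2 = s.counter % 2},
       fun t => if t ∈ {t ∈ s.graph | M.SameSCC s.graph t.1 (M.trans t.1 t.2) ∧
        s.col t = M.sccMinCol s.graph s.col t.1 ∧ s.col t % 2 = s.counter % 2} then s.counter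
        else s.col t,
       s.counter⟩
    else ⟨s.graph, s.col, s.counter + 1⟩ := rfl

lemma streamStep_def' (M : DPA Q A) (s : SState Q A) : M.streamStep s =
    if s.graph = ∅ then s
    else if M.Tset s ≠ ∅ then
      ⟨s.graph \ M.Tset s, fun t => if t ∈ M.Tset s then s.counter else s.col t, s.counter⟩
    else if M.Rset s ≠ ∅ then
      ⟨s.graph \ M.Rset s, fun t => if t ∈ M.Rset s then s.counter else s.col t, s.counter⟩
    else ⟨s.graph, s.col, s.counter + 1⟩ := by
  rw [streamStep_def]
  unfold Tset Rset
  split_ifs <;> first | rfl | (refine congrArg (fun c => SState.mk _ c _) ?_ ; funext t ; split_ifs <;> rfl)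

lemma Tset_subset (M : DPA Q A) (s : SState Q A) : M.Tset s ⊆ s.graph := fun _ ht => ht.1
lemma Rset_subset (M : DPA Q A) (s : SState Q A) : M.Rset s ⊆ s.graph := fun _ ht => ht.1

lemma step_graph_subset (M : DPA Q A) (s : SState Q A) :
    (M.streamStep s).graph ⊆ s.graph := by
  rw [streamStep_def']
  split_ifs <;> simp [Set.diff_subset]

lemma step_counter_le (M : DPA Q A) (s : SState Q A) :
    s.counter ≤ (M.streamStep s).counter := by
  rw [streamStep_def']
  split_ifs <;> simp

lemma step_col_not_mem (M : DPA Q A) (s : SState Q A) {t : Q × A} (h : t ∉ s.graph) :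
    (M.streamStep s).col t = s.col t := by
  rw [streamStep_def']
  split_ifs <;>
    simp only [] <;>
    first
      | rfl
      | (rw [if_neg]; intro hm; exact h (M.Tset_subset s hm))
      | (rw [if_neg]; intro hm; exact h (M.Rset_subset s hm))

lemma step_col_mem_new (M : DPA Q A) (s : SState Q A) {t : Q × A}
    (h : t ∈ (M.streamStep s).graph) : (M.streamStep s).col t = s.col t := by
  rw [streamStep_def'] at h ⊢
  split_ifs at h ⊢ with h1 h2 h3
  · rfl
  · exact if_neg h.2
  · exact if_neg h.2
  · rfl

lemma step_col_removed (M : DPA Q A) (s : SState Q A) {t : Q × A}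
    (h1 : t ∈ s.graph) (h2 : t ∉ (M.streamStep s).graph) :
    (M.streamStep s).col t = s.counter := by
  rw [streamStep_def'] at h2 ⊢
  split_ifs at h2 ⊢ with ha hb hc
  · exact absurd (ha ▸ h1) (Set.notMem_empty t)
  · refine if_pos ?_
    by_contra hmem
    exact h2 ⟨h1, hmem⟩
  · refine if_pos ?_
    by_contra hmem
    exact h2 ⟨h1, hmem⟩
  · exact absurd h1 h2

lemma removed_spec (M : DPA Q A) (s : SState Q A) {t : Q × A}
    (h1 : t ∈ s.graph) (h2 : t ∉ (M.streamStep s).graph) :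
    M.Transient s.graph t ∨
      (s.col t = M.sccMinCol s.graph s.col t.1 ∧ s.col t % 2 = s.counter % 2) := by
  rw [streamStep_def'] at h2
  split_ifs at h2 with ha hb hc
  · exact absurd (ha ▸ h1) (Set.notMem_empty t)
  · have hm : t ∈ M.Tset s := by by_contra hmem; exact h2 ⟨h1, hmem⟩
    exact Or.inl hm.2
  · have hm : t ∈ M.Rset s := by by_contra hmem; exact h2 ⟨h1, hmem⟩
    exact Or.inr ⟨hm.2.2.1, hm.2.2.2⟩
  · exact absurd h1 h2

lemma streamRun_zero (M : DPA Q A) :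
    M.streamRun 0 = ⟨Set.univ, fun t => M.color t.1 t.2, 0⟩ := rfl

lemma streamRun_succ (M : DPA Q A) (k : ℕ) :
    M.streamRun (k + 1) = M.streamStep (M.streamRun k) :=
  Function.iterate_succ_apply' _ _ _

lemma streamRun_graph_mono (M : DPA Q A) {j k : ℕ} (h : j ≤ k) :
    (M.streamRun k).graph ⊆ (M.streamRun j).graph := by
  induction k, h using Nat.le_induction with
  | base => exact subset_rfl
  | succ k hk ih =>
    rw [streamRun_succ]
    exact (M.step_graph_subset _).trans ih

lemma streamRun_counter_mono (M : DPA Q A) {j k : ℕ} (h : j ≤ k) :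
    (M.streamRun j).counter ≤ (M.streamRun k).counter := by
  induction k, h using Nat.le_induction with
  | base => exact le_rfl
  | succ k hk ih =>
    rw [streamRun_succ]
    exact ih.trans (M.step_counter_le _)

lemma streamRun_col_mem (M : DPA Q A) {k : ℕ} {t : Q × A}
    (h : t ∈ (M.streamRun k).graph) : (M.streamRun k).col t = M.color t.1 t.2 := by
  induction k with
  | zero => rfl
  | succ k ih =>
    rw [streamRun_succ] at h ⊢
    rw [M.step_col_mem_new _ h]
    exact ih (M.step_graph_subset _ h)

lemma streamRun_col_stable (M : DPA Q A) {k : ℕ} {t : Q × A}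
    (h : t ∉ (M.streamRun k).graph) {j : ℕ} (hj : k ≤ j) :
    (M.streamRun j).col t = (M.streamRun k).col t := by
  induction j, hj using Nat.le_induction with
  | base => rfl
  | succ j hj ih =>
    rw [streamRun_succ]
    rw [M.step_col_not_mem _ (fun hm => h (M.streamRun_graph_mono hj hm))]
    exact ih

lemma runFrom_recolor (M : DPA Q A) (c : Q × A → ℕ) (q : Q) (w : ℕ → A) (m : ℕ) :
    (M.recolor c).runFrom q w m = M.runFrom q w m := by
  induction m with
  | zero => rfl
  | succ m ih =>
    show (M.recolor c).trans ((M.recolor c).runFrom q w m) (w m) = _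
    rw [ih]
    rfl

end DPA

end Aux

theorem streamlining_preserves_language {Q : Type u} {A : Type v} [Fintype Q] [Fintype A]
    (M : DPA Q A) (hM : M.Structured) (n : ℕ) (hn : (M.streamRun n).graph = ∅)
    (w : ℕ → A) :
    (Even ((M.recolor (M.streamRun n).col).domColorFrom M.init w) ↔
      Even (M.domColorFrom M.init w)) := by
  classical
  set ρ : ℕ → Q := M.runFrom M.init w with hρ
  set τ : ℕ → Q × A := fun m => (ρ m, w m) with hτ
  have hρsucc : ∀ m, ρ (m + 1) = M.trans (ρ m) (w m) := fun m => rfl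
  set Tinf : Set (Q × A) := {t | {m | τ m = t}.Infinite} with hTinf
  -- eventually all transitions taken are in Tinf
  have hbadfin : {m | τ m ∉ Tinf}.Finite := by
    have hsub : {m | τ m ∉ Tinf} ⊆ ⋃ t ∈ (Tinfᶜ : Set (Q × A)), {m | τ m = t} := by
      intro m hm
      exact Set.mem_biUnion hm rfl
    refine Set.Finite.subset (Set.Finite.biUnion (Set.toFinite _) ?_) hsub
    intro t ht
    simpa [hTinf, Set.not_infinite] using ht
  obtain ⟨N, hN⟩ : ∃ N, ∀ m, N ≤ m → τ m ∈ Tinf := by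
    obtain ⟨B, hB⟩ := hbadfin.bddAbove
    refine ⟨B + 1, fun m hm => ?_⟩
    by_contra h
    have := hB h
    omega
  have hTne : Tinf.Nonempty := ⟨τ N, hN N le_rfl⟩
  -- infinitely visited states
  set InfSt : Q → Prop := fun a => {m | ρ m = a}.Infinite with hInfSt
  have hsrc : ∀ t ∈ Tinf, InfSt t.1 := by
    intro t ht
    refine Set.Infinite.mono ?_ ht
    intro m hm
    have : τ m = t := hm
    simpa using congrArg Prod.fst this
  have htgt : ∀ t ∈ Tinf, InfSt (M.trans t.1 t.2) := by
    intro t ht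
    have himg : ((fun m => m + 1) '' {m | τ m = t}).Infinite :=
      Set.Infinite.image (fun a _ b _ h => by omega) ht
    refine Set.Infinite.mono ?_ himg
    rintro m ⟨m', hm', rfl⟩
    have ht' : τ m' = t := hm'
    have h1 : ρ m' = t.1 := by simpa using congrArg Prod.fst ht'
    have h2 : w m' = t.2 := by simpa using congrArg Prod.snd ht'
    show ρ (m' + 1) = M.trans t.1 t.2
    rw [hρsucc, h1, h2]
  -- reachability through Tinf transitions
  set E : Q → Q → Prop := fun a b => ∃ x, (a, x) ∈ Tinf ∧ M.trans a x = b with hE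
  have hseg : ∀ n1, N ≤ n1 → ∀ m, Relation.ReflTransGen E (ρ n1) (ρ (n1 + m)) := by
    intro n1 hn1 m
    induction m with
    | zero => exact Relation.ReflTransGen.refl
    | succ m ih =>
      refine ih.tail ?_
      refine ⟨w (n1 + m), hN _ (by omega), ?_⟩
      exact (hρsucc (n1 + m)).symm
  have hreach : ∀ a b, InfSt a → InfSt b → Relation.ReflTransGen E a b := by
    intro a b ha hb
    obtain ⟨n1, hn1, hgt1⟩ := ha.exists_gt N
    obtain ⟨n2, hn2, hgt2⟩ := hb.exists_gt n1
    have heq : n1 + (n2 - n1) = n2 := by omega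
    have := hseg n1 (le_of_lt hgt1) (n2 - n1)
    rw [heq] at this
    have ha' : ρ n1 = a := hn1
    have hb' : ρ n2 = b := hn2
    rwa [ha', hb'] at this
  have hEsub : ∀ G : Set (Q × A), Tinf ⊆ G → ∀ a b, E a b → M.edgeIn G a b := by
    rintro G hG a b ⟨x, hx, he⟩
    exact ⟨x, hG hx, he⟩
  -- the first time a Tinf transition is removed
  have hP : ∃ j, ¬ Tinf ⊆ (M.streamRun j).graph := by
    refine ⟨n, fun h => ?_⟩
    obtain ⟨t, ht⟩ := hTne
    have := h ht
    rw [hn] at this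
    exact this
  set K := Nat.find hP with hK
  have hKpos : K ≠ 0 := by
    intro h
    have hsp := Nat.find_spec hP
    rw [← hK, h] at hsp
    exact hsp (fun t _ => Set.mem_univ t)
  set k := K - 1 with hk
  have hkK : k + 1 = K := by omega
  have hk1 : Tinf ⊆ (M.streamRun k).graph := by
    by_contra h
    exact (Nat.find_min hP (show k < K by omega)) h
  have hk2 : ¬ Tinf ⊆ (M.streamRun (k + 1)).graph := by
    rw [hkK]
    exact Nat.find_spec hP
  obtain ⟨t0, ht0, ht0r⟩ : ∃ t ∈ Tinf, t ∉ (M.streamRun (k + 1)).graph :=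
    Set.not_subset.mp hk2
  -- analyze the removal
  have ht0g : t0 ∈ (M.streamRun k).graph := hk1 ht0
  have ht0r' : t0 ∉ (M.streamStep (M.streamRun k)).graph := by
    rwa [← M.streamRun_succ k]
  have hspec := M.removed_spec (M.streamRun k) ht0g ht0r'
  have hnt : ¬ M.Transient (M.streamRun k).graph t0 := by
    intro htr
    exact htr (Relation.ReflTransGen.mono (hEsub _ hk1) _ _
      (hreach _ _ (htgt t0 ht0) (hsrc t0 ht0)))
  have hmin : (M.streamRun k).col t0 =
      M.sccMinCol (M.streamRun k).graph (M.streamRun k).col t0.1 ∧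
      (M.streamRun k).col t0 % 2 = (M.streamRun k).counter % 2 :=
    hspec.resolve_left hnt
  set colO : Q × A → ℕ := fun t => M.color t.1 t.2 with hcolO
  set colN : Q × A → ℕ := (M.streamRun n).col with hcolN
  have ht0col : (M.streamRun k).col t0 = colO t0 := M.streamRun_col_mem ht0g
  -- colO t0 is minimal over Tinf
  have hsame : ∀ a, InfSt a → M.SameSCC (M.streamRun k).graph a t0.1 := by
    intro a ha
    exact ⟨Relation.ReflTransGen.mono (hEsub _ hk1) _ _ (hreach _ _ ha (hsrc t0 ht0)),
      Relation.ReflTransGen.mono (hEsub _ hk1) _ _ (hreach _ _ (hsrc t0 ht0) ha)⟩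
  have hminle : ∀ t' ∈ Tinf, colO t0 ≤ colO t' := by
    intro t' ht'
    rw [← ht0col, hmin.1]
    refine Nat.sInf_le ⟨t'.1, t'.2, ?_, ?_, ?_, ?_⟩
    · simpa using hk1 ht'
    · exact hsame t'.1 (hsrc t' ht')
    · exact hsame _ (htgt t' ht')
    · have : (t'.1, t'.2) = t' := rfl
      rw [this]
      exact M.streamRun_col_mem (hk1 ht')
  -- the inf-often color sets are images of Tinf
  have himg : ∀ c : Q × A → ℕ,
      {v | InfOften (fun m => c (τ m)) v} = c '' Tinf := by
    intro c
    ext v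
    constructor
    · intro hv
      obtain ⟨m, hm, he⟩ := hv N
      exact ⟨τ m, hN m hm, he⟩
    · rintro ⟨t, ht, rfl⟩
      intro N'
      obtain ⟨m, hm, hlt⟩ := Set.Infinite.exists_gt ht N'
      exact ⟨m, le_of_lt hlt, congrArg c hm⟩
  have hcolsO : M.colorsFrom M.init w = fun m => colO (τ m) := by
    funext m
    rfl
  have hcolsN : (M.recolor colN).colorsFrom M.init w = fun m => colN (τ m) := by
    funext m
    show (M.recolor colN).color ((M.recolor colN).runFrom M.init w m) (w m) = _
    rw [M.runFrom_recolor]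
    rfl
  -- old dominating color
  have hdomOld : M.domColorFrom M.init w = colO t0 := by
    rw [DPA.domColorFrom, hcolsO, himg]
    refine le_antisymm (Nat.sInf_le ⟨t0, ht0, rfl⟩) ?_
    refine le_csInf ⟨colO t0, t0, ht0, rfl⟩ ?_
    rintro b ⟨t', ht', rfl⟩
    exact hminle t' ht'
  -- new colors
  have hkn : k < n := by
    by_contra h
    have : t0 ∈ (M.streamRun n).graph := M.streamRun_graph_mono (by omega) ht0g
    rw [hn] at this
    exact this
  have hcolNt0 : colN t0 = (M.streamRun k).counter := by
    have h1 : (M.streamRun (k + 1)).col t0 = (M.streamRun k).counter := by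
      rw [M.streamRun_succ k]
      exact M.step_col_removed _ ht0g ht0r'
    have h2 := M.streamRun_col_stable ht0r (show k + 1 ≤ n by omega)
    rw [hcolN, h2, h1]
  have hcolNge : ∀ t' ∈ Tinf, (M.streamRun k).counter ≤ colN t' := by
    intro t' ht'
    have hPj : ∃ j, t' ∉ (M.streamRun j).graph := by
      refine ⟨n, ?_⟩
      rw [hn]
      exact Set.notMem_empty t'
    set j := Nat.find hPj with hj
    have hjspec : t' ∉ (M.streamRun j).graph := Nat.find_spec hPj
    have hjk : k < j := by
      by_contra h
      push_neg at h
      exact hjspec (M.streamRun_graph_mono h (hk1 ht'))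
    have hjn : j ≤ n := Nat.find_le (by rw [hn]; exact Set.notMem_empty t')
    have hmem : t' ∈ (M.streamRun (j - 1)).graph :=
      not_not.mp (Nat.find_min hPj (show j - 1 < j by omega))
    have hj1 : j - 1 + 1 = j := by omega
    have hrm : t' ∉ (M.streamStep (M.streamRun (j - 1))).graph := by
      rw [← M.streamRun_succ, hj1]
      exact hjspec
    have h1 : (M.streamRun j).col t' = (M.streamRun (j - 1)).counter := by
      conv_lhs => rw [← hj1, M.streamRun_succ]
      exact M.step_col_removed _ hmem hrm
    have h2 : colN t' = (M.streamRun j).col t' :=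
      M.streamRun_col_stable hjspec hjn
    rw [h2, h1]
    exact M.streamRun_counter_mono (show k ≤ j - 1 by omega)
  have hdomNew : (M.recolor colN).domColorFrom M.init w = (M.streamRun k).counter := by
    rw [DPA.domColorFrom, hcolsN, himg]
    refine le_antisymm (Nat.sInf_le ⟨t0, ht0, hcolNt0⟩) ?_
    refine le_csInf ⟨colN t0, t0, ht0, rfl⟩ ?_
    rintro b ⟨t', ht', rfl⟩
    exact hcolNge t' ht'
  rw [hdomNew, hdomOld]
  have hp := hmin.2
  rw [ht0col] at hp
  rw [Nat.even_iff, Nat.even_iff]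
  omega
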